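/- (Theorem 3.5, Craig–Wayne Lemma in Sobolev regularity) Let s > 1/2, let n ≥ 1 be an integer, and let q ∈ H^s(𝕋) be real-valued with ‖q‖_s ≤ n/(2C_s). Let λ ∈ ℂ with |λ − n²| ≤ n/2, let u = u⁻·e_{−n} + u⁺·e_n with |u⁻| ≤ 1 and |u⁺| ≤ 1, set v := (Id − T_n)^{-1}T_n u ∈ 𝒬_n and f := u + v. Then for every m ∈ ℤ one has |(f, e_m)_{L²}| ≤ 2·⟨|m| − n⟩^{-s}. -/

import Mathlib

noncomputable section

/-- Japanese bracket `⟨m⟩ = max {1, |m|}`. -/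
def jap (m : ℤ) : ℝ := max 1 |(m : ℝ)|

/-- Squared shifted Sobolev norm `‖u‖_{s;j}²` of a sequence of Fourier coefficients. -/
def shiftNormSq (s : ℝ) (j : ℤ) (u : ℤ → ℂ) : ℝ :=
  ∑' m : ℤ, jap (m + j) ^ (2 * s) * ‖u m‖ ^ 2

/-- Shifted Sobolev norm `‖u‖_{s;j}`. -/
def shiftNorm (s : ℝ) (j : ℤ) (u : ℤ → ℂ) : ℝ := Real.sqrt (shiftNormSq s j u)

/-- Sobolev norm `‖u‖_s`. -/
def sobNorm (s : ℝ) (u : ℤ → ℂ) : ℝ := shiftNorm s 0 u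

/-- Membership in `H^s(𝕋)`. -/
def memHs (s : ℝ) (u : ℤ → ℂ) : Prop :=
  Summable fun m : ℤ => jap m ^ (2 * s) * ‖u m‖ ^ 2

/-- Fourier coefficients of the product `q·w` (convolution). -/
def fconv (q w : ℤ → ℂ) (m : ℤ) : ℂ := ∑' k : ℤ, q k * w (m - k)

/-- The operator `T_n = T_n(q,λ)`. -/
def TnOp (q : ℤ → ℂ) (lam : ℂ) (n : ℕ) (w : ℤ → ℂ) : ℤ → ℂ := fun m =>
  if |m| = (n : ℤ) then 0 else (lam - (m : ℂ) ^ 2)⁻¹ * fconv q w m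

/-- Membership in `𝒬_n`. -/
def memQ (n : ℕ) (w : ℤ → ℂ) : Prop := w (n : ℤ) = 0 ∧ w (-(n : ℤ)) = 0

/-- The Neumann series `Σ_{k≥0} T_n^k w`. -/
def neumann (q : ℤ → ℂ) (lam : ℂ) (n : ℕ) (w : ℤ → ℂ) : ℤ → ℂ := fun m =>
  ∑' k : ℕ, (TnOp q lam n)^[k] w m

/-- The Fourier coefficients of the exponential `e_p`. -/
def efun (p : ℤ) : ℤ → ℂ := fun k => if k = p then 1 else 0

-- ### basic jap lemmas

lemma jap_pos (m : ℤ) : 0 < jap m := lt_of_lt_of_le one_pos (le_max_left _ _)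
lemma jap_nonneg (m : ℤ) : 0 ≤ jap m := (jap_pos m).le
lemma one_le_jap (m : ℤ) : 1 ≤ jap m := le_max_left _ _
lemma abs_le_jap (m : ℤ) : |(m : ℝ)| ≤ jap m := le_max_right _ _
lemma jap_zero : jap 0 = 1 := by simp [jap]

lemma jap_add_le (a b : ℤ) : jap (a + b) ≤ jap a + jap b := by
  have h1 : |((a : ℝ)) + b| ≤ jap a + jap b :=
    (abs_add_le _ _).trans (add_le_add (abs_le_jap a) (abs_le_jap b))
  have h2 : (1 : ℝ) ≤ jap a + jap b := by
    have := one_le_jap a; have := jap_nonneg b; linarith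
  have h3 : ((a + b : ℤ) : ℝ) = (a : ℝ) + b := by push_cast; ring
  unfold jap; rw [h3]; exact max_le h2 h1

lemma jap_add_le_mul (a b : ℤ) : jap (a + b) ≤ 2 * jap a * jap b := by
  have := jap_add_le a b
  nlinarith [one_le_jap a, one_le_jap b]

lemma jap_rpow_pos (m : ℤ) (s : ℝ) : 0 < jap m ^ s := Real.rpow_pos_of_pos (jap_pos m) s
lemma jap_rpow_nonneg (m : ℤ) (s : ℝ) : 0 ≤ jap m ^ s := (jap_rpow_pos m s).le

lemma one_le_jap_rpow (m : ℤ) {s : ℝ} (hs : 0 ≤ s) : 1 ≤ jap m ^ s := by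
  rw [← Real.one_rpow s]
  exact Real.rpow_le_rpow zero_le_one (one_le_jap m) hs

lemma jap_rpow_two_mul (m : ℤ) (s : ℝ) : jap m ^ (2 * s) = (jap m ^ s) ^ 2 := by
  rw [← Real.rpow_natCast (jap m ^ s) 2, ← Real.rpow_mul (jap_nonneg m)]
  norm_num [mul_comm]

lemma jap_rpow_neg (m : ℤ) (s : ℝ) : jap m ^ (-s) = (jap m ^ s)⁻¹ :=
  Real.rpow_neg (jap_nonneg m) s

lemma jap_rpow_anti {a b : ℤ} {s : ℝ} (hs : 0 ≤ s) (h : jap a ≤ jap b) :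
    jap b ^ (-s) ≤ jap a ^ (-s) := by
  rw [jap_rpow_neg, jap_rpow_neg]
  exact inv_anti₀ (jap_rpow_pos a s) (Real.rpow_le_rpow (jap_nonneg a) h hs)

lemma jap_mono {a b : ℤ} (h : |a| ≤ |b|) : jap a ≤ jap b := by
  unfold jap
  have : |(a : ℝ)| ≤ |(b : ℝ)| := by
    rw [← Int.cast_abs, ← Int.cast_abs]; exact_mod_cast h
  exact max_le_max le_rfl this

lemma summable_jap_rpow {s : ℝ} (hs : 1 / 2 < s) :
    Summable fun m : ℤ => jap m ^ (-(2 * s)) := by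
  have h1 : Summable fun m : ℤ => |(m : ℝ)| ^ (-(2 * s)) :=
    Real.summable_abs_int_rpow (by linarith)
  have h2 : Summable fun m : ℤ => (if m = 0 then (1 : ℝ) else 0) :=
    (hasSum_ite_eq (0 : ℤ) (1 : ℝ)).summable
  apply Summable.of_nonneg_of_le (fun m => (jap_rpow_pos m _).le) _ (h1.add h2)
  intro m
  by_cases hm : m = 0
  · subst hm
    rw [jap_zero, Real.one_rpow]
    simp [Real.zero_rpow (by intro h; simp at h; linarith : -(2 * s) ≠ 0)]
  · have habs : jap m = |(m : ℝ)| := by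
      apply max_eq_right
      rw [← Int.cast_abs]
      exact_mod_cast Int.one_le_abs (by exact hm)
    rw [habs]
    simp [hm]

-- chunk 2: Cauchy-Schwarz and convolution summability
section Chunk2

lemma sq_tsum_le {c x : ℤ → ℝ} (hc0 : ∀ k, 0 ≤ c k) (hx0 : ∀ k, 0 ≤ x k)
    (hc : Summable c) (h1 : Summable fun k => c k * x k)
    (h2 : Summable fun k => c k * x k ^ 2) :
    (∑' k, c k * x k) ^ 2 ≤ (∑' k, c k) * (∑' k, c k * x k ^ 2) := by
  have hprod : 0 ≤ (∑' k, c k) * (∑' k, c k * x k ^ 2) :=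
    mul_nonneg (tsum_nonneg hc0) (tsum_nonneg fun k => mul_nonneg (hc0 k) (sq_nonneg _))
  have key : ∑' k, c k * x k ≤ Real.sqrt ((∑' k, c k) * (∑' k, c k * x k ^ 2)) := by
    apply Summable.tsum_le_of_sum_le h1
    intro F
    have hF0 : 0 ≤ ∑ k ∈ F, c k * x k :=
      Finset.sum_nonneg fun k _ => mul_nonneg (hc0 k) (hx0 k)
    rw [Real.le_sqrt hF0 hprod]
    calc (∑ k ∈ F, c k * x k) ^ 2
        = (∑ k ∈ F, Real.sqrt (c k) * (Real.sqrt (c k) * x k)) ^ 2 := by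
          congr 1
          refine Finset.sum_congr rfl fun k _ => ?_
          rw [← mul_assoc, Real.mul_self_sqrt (hc0 k)]
      _ ≤ (∑ k ∈ F, Real.sqrt (c k) ^ 2) * (∑ k ∈ F, (Real.sqrt (c k) * x k) ^ 2) :=
          Finset.sum_mul_sq_le_sq_mul_sq F _ _
      _ = (∑ k ∈ F, c k) * (∑ k ∈ F, c k * x k ^ 2) := by
          congr 1
          · refine Finset.sum_congr rfl fun k _ => Real.sq_sqrt (hc0 k)
          · refine Finset.sum_congr rfl fun k _ => ?_
            rw [mul_pow, Real.sq_sqrt (hc0 k)]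
      _ ≤ (∑' k, c k) * (∑' k, c k * x k ^ 2) := by
          apply mul_le_mul (Summable.sum_le_tsum F (fun k _ => hc0 k) hc)
            (Summable.sum_le_tsum F (fun k _ => mul_nonneg (hc0 k) (sq_nonneg _)) h2)
            (Finset.sum_nonneg fun k _ => mul_nonneg (hc0 k) (sq_nonneg _))
            (tsum_nonneg hc0)
  calc (∑' k, c k * x k) ^ 2
      ≤ Real.sqrt ((∑' k, c k) * (∑' k, c k * x k ^ 2)) ^ 2 := by
        apply pow_le_pow_left₀ (tsum_nonneg fun k => mul_nonneg (hc0 k) (hx0 k)) key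
    _ = (∑' k, c k) * (∑' k, c k * x k ^ 2) := Real.sq_sqrt hprod

lemma conv_sq_summable {c d : ℤ → ℝ} (hc0 : ∀ k, 0 ≤ c k) (hd0 : ∀ k, 0 ≤ d k)
    (hc : Summable c) (hd2 : Summable fun k => d k ^ 2) :
    Summable fun m => (∑' k, c k * d (m - k)) ^ 2 := by
  have hD : ∀ j, d j ^ 2 ≤ ∑' k, d k ^ 2 := fun j => Summable.le_tsum hd2 j fun _ _ => sq_nonneg _
  have hdbd : ∀ j, d j ≤ Real.sqrt (∑' k, d k ^ 2) := fun j =>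
    (Real.le_sqrt (hd0 j) (tsum_nonneg fun _ => sq_nonneg _)).mpr (hD j)
  have h2 : ∀ m, Summable fun k => c k * d (m - k) ^ 2 := fun m =>
    Summable.of_nonneg_of_le (fun k => mul_nonneg (hc0 k) (sq_nonneg _))
      (fun k => mul_le_mul_of_nonneg_left (hD _) (hc0 k)) (hc.mul_right _)
  have h1 : ∀ m, Summable fun k => c k * d (m - k) := fun m =>
    Summable.of_nonneg_of_le (fun k => mul_nonneg (hc0 k) (hd0 _))
      (fun k => mul_le_mul_of_nonneg_left (hdbd _) (hc0 k)) (hc.mul_right _)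
  have hfub : Summable fun m => ∑' k, c k * d (m - k) ^ 2 := by
    have hrow : ∀ k : ℤ, Summable fun m : ℤ => c k * d (m - k) ^ 2 := by
      intro k
      have : Summable fun m : ℤ => d (m - k) ^ 2 :=
        ((Equiv.subRight k).summable_iff (f := fun j : ℤ => d j ^ 2)).mpr hd2
      exact this.mul_left (c k)
    have hrowsum : ∀ k : ℤ, (∑' m : ℤ, c k * d (m - k) ^ 2) = c k * ∑' j : ℤ, d j ^ 2 := by
      intro k
      rw [tsum_mul_left]
      congr 1
      exact (Equiv.subRight k).tsum_eq (fun j : ℤ => d j ^ 2)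
    have hprod : Summable (fun p : ℤ × ℤ => c p.1 * d (p.2 - p.1) ^ 2) := by
      refine (summable_prod_of_nonneg fun p => mul_nonneg (hc0 _) (sq_nonneg _)).mpr
        ⟨fun k => hrow k, ?_⟩
      exact Summable.congr (hc.mul_right (∑' j : ℤ, d j ^ 2)) fun k => (hrowsum k).symm
    have hswap : Summable (fun p : ℤ × ℤ => c p.2 * d (p.1 - p.2) ^ 2) := by
      have h := (Equiv.prodComm ℤ ℤ).summable_iff
        (f := fun p : ℤ × ℤ => c p.2 * d (p.1 - p.2) ^ 2)
      exact h.mp hprod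
    exact ((summable_prod_of_nonneg fun p => mul_nonneg (hc0 _) (sq_nonneg _)).mp hswap).2
  apply Summable.of_nonneg_of_le (fun m => sq_nonneg _) _ (hfub.mul_left (∑' k, c k))
  intro m
  exact sq_tsum_le hc0 (fun k => hd0 _) hc (h1 m) (h2 m)

end Chunk2
-- chunk 3: memHs lemmas
section Chunk3

lemma memHs_sq_eq {s : ℝ} (w : ℤ → ℂ) (m : ℤ) :
    jap m ^ (2 * s) * ‖w m‖ ^ 2 = (jap m ^ s * ‖w m‖) ^ 2 := by
  rw [mul_pow, ← jap_rpow_two_mul]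

lemma summable_norm_of_memHs {s : ℝ} (hs : 1 / 2 < s) {w : ℤ → ℂ} (hw : memHs s w) :
    Summable fun k => ‖w k‖ := by
  have hs0 : (0 : ℝ) ≤ s := by linarith
  refine Summable.of_nonneg_of_le (fun k => norm_nonneg _) (fun k => ?_)
    (((summable_jap_rpow hs).add hw).mul_left (1 / 2))
  have hid : ‖w k‖ = jap k ^ (-s) * (jap k ^ s * ‖w k‖) := by
    rw [jap_rpow_neg, inv_mul_cancel_left₀ (ne_of_gt (jap_rpow_pos k s))]
  have hsq1 : (jap k ^ (-s)) ^ 2 = jap k ^ (-(2 * s)) := by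
    rw [← Real.rpow_natCast (jap k ^ (-s)) 2, ← Real.rpow_mul (jap_nonneg k)]
    norm_num [mul_comm]
  have hsq2 : (jap k ^ s * ‖w k‖) ^ 2 = jap k ^ (2 * s) * ‖w k‖ ^ 2 :=
    (memHs_sq_eq w k).symm
  have hab : jap k ^ (-s) * (jap k ^ s * ‖w k‖) ≤
      ((jap k ^ (-s)) ^ 2 + (jap k ^ s * ‖w k‖) ^ 2) / 2 := by
    nlinarith [sq_nonneg (jap k ^ (-s) - jap k ^ s * ‖w k‖)]
  calc ‖w k‖ = jap k ^ (-s) * (jap k ^ s * ‖w k‖) := hid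
    _ ≤ ((jap k ^ (-s)) ^ 2 + (jap k ^ s * ‖w k‖) ^ 2) / 2 := hab
    _ = 1 / 2 * (jap k ^ (-(2 * s)) + jap k ^ (2 * s) * ‖w k‖ ^ 2) := by
        rw [hsq1, hsq2]; ring

lemma norm_le_tsum_norm {w : ℤ → ℂ} (hw : Summable fun k => ‖w k‖) (j : ℤ) :
    ‖w j‖ ≤ ∑' k, ‖w k‖ := Summable.le_tsum hw j fun _ _ => norm_nonneg _

lemma summable_conv_of {s : ℝ} (hs : 1 / 2 < s) {q A : ℤ → ℂ} (hq : memHs s q)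
    (hA : memHs s A) (m : ℤ) : Summable fun k => q k * A (m - k) := by
  have hα := summable_norm_of_memHs hs hq
  have hA1 := summable_norm_of_memHs hs hA
  apply Summable.of_norm
  refine Summable.of_nonneg_of_le (fun k => norm_nonneg _) (fun k => ?_)
    (hα.mul_right (∑' j, ‖A j‖))
  rw [norm_mul]
  exact mul_le_mul_of_nonneg_left (norm_le_tsum_norm hA1 _) (norm_nonneg _)

lemma memHs_fconv {s : ℝ} (hs : 1 / 2 < s) {q w : ℤ → ℂ} (hq : memHs s q)
    (hw : memHs s w) : memHs s (fconv q w) := by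
  have hs0 : (0 : ℝ) ≤ s := by linarith
  set A : ℤ → ℝ := fun k => jap k ^ s * ‖q k‖ with hA
  set B : ℤ → ℝ := fun k => jap k ^ s * ‖w k‖ with hB
  have hA0 : ∀ k, 0 ≤ A k := fun k => mul_nonneg (jap_rpow_nonneg k s) (norm_nonneg _)
  have hB0 : ∀ k, 0 ≤ B k := fun k => mul_nonneg (jap_rpow_nonneg k s) (norm_nonneg _)
  have hA2 : Summable fun k => A k ^ 2 :=
    Summable.congr hq fun k => memHs_sq_eq q k
  have hB2 : Summable fun k => B k ^ 2 :=
    Summable.congr hw fun k => memHs_sq_eq w k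
  have hα : Summable fun k => ‖q k‖ := summable_norm_of_memHs hs hq
  have hω : Summable fun k => ‖w k‖ := summable_norm_of_memHs hs hw
  -- bounds
  have hABound : ∀ j, A j ≤ Real.sqrt (∑' k, A k ^ 2) := fun j =>
    (Real.le_sqrt (hA0 j) (tsum_nonneg fun _ => sq_nonneg _)).mpr
      (Summable.le_tsum hA2 j fun _ _ => sq_nonneg _)
  have hBBound : ∀ j, B j ≤ Real.sqrt (∑' k, B k ^ 2) := fun j =>
    (Real.le_sqrt (hB0 j) (tsum_nonneg fun _ => sq_nonneg _)).mpr
      (Summable.le_tsum hB2 j fun _ _ => sq_nonneg _)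
  -- per-m summabilities
  have hωshift : ∀ m : ℤ, Summable fun k : ℤ => ‖w (m - k)‖ := fun m =>
    ((Equiv.subLeft m).summable_iff (f := fun j : ℤ => ‖w j‖)).mpr hω
  have hP : ∀ m, Summable fun k => A k * ‖w (m - k)‖ := by
    intro m
    refine Summable.of_nonneg_of_le (fun k => mul_nonneg (hA0 k) (norm_nonneg _))
      (fun k => mul_le_mul_of_nonneg_right (hABound k) (norm_nonneg _))
      ((hωshift m).mul_left _)
  have hQ : ∀ m, Summable fun k => ‖q k‖ * B (m - k) := by
    intro m
    refine Summable.of_nonneg_of_le (fun k => mul_nonneg (norm_nonneg _) (hB0 _))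
      (fun k => mul_le_mul_of_nonneg_left (hBBound _) (norm_nonneg _))
      (hα.mul_right _)
  have hqw : ∀ m, Summable fun k : ℤ => ‖q k‖ * ‖w (m - k)‖ := by
    intro m
    refine Summable.of_nonneg_of_le (fun k => mul_nonneg (norm_nonneg _) (norm_nonneg _))
      (fun k => mul_le_mul_of_nonneg_left (norm_le_tsum_norm hω _) (norm_nonneg _))
      (hα.mul_right _)
  set P : ℤ → ℝ := fun m => ∑' k, A k * ‖w (m - k)‖ with hPdef
  set Q : ℤ → ℝ := fun m => ∑' k, ‖q k‖ * B (m - k) with hQdef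
  -- pointwise estimate
  have hpoint : ∀ m, jap m ^ s * ‖fconv q w m‖ ≤ 2 ^ s * (P m + Q m) := by
    intro m
    have step1 : ‖fconv q w m‖ ≤ ∑' k, ‖q k‖ * ‖w (m - k)‖ := by
      have := norm_tsum_le_tsum_norm (f := fun k : ℤ => q k * w (m - k))
        (by simpa [norm_mul] using hqw m)
      simpa [fconv, norm_mul] using this
    have step2 : jap m ^ s * ‖fconv q w m‖ ≤ ∑' k, jap m ^ s * (‖q k‖ * ‖w (m - k)‖) := by
      rw [tsum_mul_left]
      exact mul_le_mul_of_nonneg_left step1 (jap_rpow_nonneg m s)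
    have step3 : ∀ k, jap m ^ s * (‖q k‖ * ‖w (m - k)‖) ≤
        2 ^ s * (A k * ‖w (m - k)‖ + ‖q k‖ * B (m - k)) := by
      intro k
      have h1 : jap m ≤ jap k + jap (m - k) := by
        have := jap_add_le k (m - k); rwa [add_sub_cancel] at this
      have h2 : jap k + jap (m - k) ≤ 2 * max (jap k) (jap (m - k)) := by
        rcases le_total (jap k) (jap (m - k)) with h | h
        · rw [max_eq_right h]; linarith
        · rw [max_eq_left h]; linarith
      have hmax0 : 0 ≤ max (jap k) (jap (m - k)) := le_trans (jap_nonneg k) (le_max_left _ _)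
      have hm1 : jap m ^ s ≤ 2 ^ s * (jap k ^ s + jap (m - k) ^ s) := by
        calc jap m ^ s ≤ (2 * max (jap k) (jap (m - k))) ^ s :=
              Real.rpow_le_rpow (jap_nonneg m) (h1.trans h2) hs0
          _ = 2 ^ s * max (jap k) (jap (m - k)) ^ s :=
              Real.mul_rpow (by norm_num) hmax0
          _ ≤ 2 ^ s * (jap k ^ s + jap (m - k) ^ s) := by
              apply mul_le_mul_of_nonneg_left _ (Real.rpow_nonneg (by norm_num) s)
              rcases max_cases (jap k) (jap (m - k)) with ⟨heq, _⟩ | ⟨heq, _⟩ <;> rw [heq]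
              · exact le_add_of_nonneg_right (jap_rpow_nonneg _ s)
              · exact le_add_of_nonneg_left (jap_rpow_nonneg _ s)
      calc jap m ^ s * (‖q k‖ * ‖w (m - k)‖)
          ≤ (2 ^ s * (jap k ^ s + jap (m - k) ^ s)) * (‖q k‖ * ‖w (m - k)‖) :=
            mul_le_mul_of_nonneg_right hm1 (mul_nonneg (norm_nonneg _) (norm_nonneg _))
        _ = 2 ^ s * (A k * ‖w (m - k)‖ + ‖q k‖ * B (m - k)) := by
            rw [hA, hB]; ring
    have hsumL : Summable fun k => jap m ^ s * (‖q k‖ * ‖w (m - k)‖) :=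
      (hqw m).mul_left _
    have hsumR : Summable fun k => 2 ^ s * (A k * ‖w (m - k)‖ + ‖q k‖ * B (m - k)) :=
      ((hP m).add (hQ m)).mul_left _
    calc jap m ^ s * ‖fconv q w m‖
        ≤ ∑' k, jap m ^ s * (‖q k‖ * ‖w (m - k)‖) := step2
      _ ≤ ∑' k, 2 ^ s * (A k * ‖w (m - k)‖ + ‖q k‖ * B (m - k)) :=
          Summable.tsum_le_tsum step3 hsumL hsumR
      _ = 2 ^ s * (P m + Q m) := by
          rw [tsum_mul_left, Summable.tsum_add (hP m) (hQ m)]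
  -- summability of P^2 and Q^2
  have hPsq : Summable fun m => P m ^ 2 := by
    have hconv : Summable fun m => (∑' k, ‖w k‖ * A (m - k)) ^ 2 :=
      conv_sq_summable (fun k => norm_nonneg _) hA0 hω hA2
    refine Summable.congr hconv fun m => ?_
    congr 1
    have := (Equiv.subLeft m).tsum_eq (fun k : ℤ => A k * ‖w (m - k)‖)
    rw [hPdef]
    dsimp at this ⊢
    rw [← this]
    apply tsum_congr
    intro j
    have hj : m - (m - j) = j := by ring
    simp only [Equiv.subLeft_apply, hj]
    ring
  have hQsq : Summable fun m => Q m ^ 2 := by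
    exact conv_sq_summable (fun k => norm_nonneg _) hB0 hα hB2
  -- conclude
  have hP0 : ∀ m, 0 ≤ P m := fun m =>
    tsum_nonneg fun k => mul_nonneg (hA0 k) (norm_nonneg _)
  have hQ0 : ∀ m, 0 ≤ Q m := fun m =>
    tsum_nonneg fun k => mul_nonneg (norm_nonneg _) (hB0 _)
  refine Summable.of_nonneg_of_le
    (fun m => mul_nonneg (jap_rpow_nonneg m _) (sq_nonneg _)) (fun m => ?_)
    (((hPsq.mul_left (2 ^ s * 2 ^ s * 2)).add (hQsq.mul_left (2 ^ s * 2 ^ s * 2))))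
  rw [memHs_sq_eq]
  have h0 : 0 ≤ jap m ^ s * ‖fconv q w m‖ :=
    mul_nonneg (jap_rpow_nonneg m s) (norm_nonneg _)
  calc (jap m ^ s * ‖fconv q w m‖) ^ 2 ≤ (2 ^ s * (P m + Q m)) ^ 2 := by
        apply pow_le_pow_left₀ h0 (hpoint m)
    _ ≤ 2 ^ s * 2 ^ s * 2 * P m ^ 2 + 2 ^ s * 2 ^ s * 2 * Q m ^ 2 := by
        nlinarith [sq_nonneg (P m - Q m), hP0 m, hQ0 m,
          Real.rpow_nonneg (show (0:ℝ) ≤ 2 by norm_num) s]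

end Chunk3
-- chunk 4: shifted norms, TnOp facts
section Chunk4

lemma shiftNormSq_nonneg (s : ℝ) (j : ℤ) (w : ℤ → ℂ) : 0 ≤ shiftNormSq s j w :=
  tsum_nonneg fun m => mul_nonneg (jap_rpow_nonneg _ _) (sq_nonneg _)

lemma shiftNorm_nonneg (s : ℝ) (j : ℤ) (w : ℤ → ℂ) : 0 ≤ shiftNorm s j w :=
  Real.sqrt_nonneg _

lemma summable_shift {s : ℝ} (hs0 : 0 ≤ s) {w : ℤ → ℂ} (hw : memHs s w) (j : ℤ) :
    Summable fun m : ℤ => jap (m + j) ^ (2 * s) * ‖w m‖ ^ 2 := by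
  refine Summable.of_nonneg_of_le
    (fun m => mul_nonneg (jap_rpow_nonneg _ _) (sq_nonneg _)) (fun m => ?_)
    (hw.mul_left ((2 * jap j) ^ (2 * s)))
  have h : jap (m + j) ≤ 2 * jap j * jap m := by
    have := jap_add_le_mul m j
    linarith [this, mul_comm (jap m) (jap j)]
  have h2s : (0:ℝ) ≤ 2 * s := by linarith
  calc jap (m + j) ^ (2 * s) * ‖w m‖ ^ 2
      ≤ (2 * jap j * jap m) ^ (2 * s) * ‖w m‖ ^ 2 := by
        apply mul_le_mul_of_nonneg_right
          (Real.rpow_le_rpow (jap_nonneg _) h h2s) (sq_nonneg _)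
    _ = (2 * jap j) ^ (2 * s) * (jap m ^ (2 * s) * ‖w m‖ ^ 2) := by
        rw [Real.mul_rpow (mul_nonneg (by norm_num) (jap_nonneg j)) (jap_nonneg m)]; ring

lemma coeff_le_shiftNorm {s : ℝ} (hs0 : 0 ≤ s) {w : ℤ → ℂ} (hw : memHs s w)
    (j m : ℤ) : ‖w m‖ ≤ jap (m + j) ^ (-s) * shiftNorm s j w := by
  have hsum := summable_shift hs0 hw j
  have h1 : jap (m + j) ^ (2 * s) * ‖w m‖ ^ 2 ≤ shiftNormSq s j w :=
    Summable.le_tsum hsum m fun _ _ => mul_nonneg (jap_rpow_nonneg _ _) (sq_nonneg _)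
  have h2 : jap (m + j) ^ s * ‖w m‖ ≤ shiftNorm s j w := by
    rw [shiftNorm]
    rw [Real.le_sqrt (mul_nonneg (jap_rpow_nonneg _ _) (norm_nonneg _))
      (shiftNormSq_nonneg s j w)]
    calc (jap (m + j) ^ s * ‖w m‖) ^ 2 = jap (m + j) ^ (2 * s) * ‖w m‖ ^ 2 := by
          rw [mul_pow, ← jap_rpow_two_mul]
      _ ≤ shiftNormSq s j w := h1
  calc ‖w m‖ = jap (m + j) ^ (-s) * (jap (m + j) ^ s * ‖w m‖) := by
        rw [jap_rpow_neg, inv_mul_cancel_left₀ (ne_of_gt (jap_rpow_pos _ s))]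
    _ ≤ jap (m + j) ^ (-s) * shiftNorm s j w :=
        mul_le_mul_of_nonneg_left h2 (jap_rpow_nonneg _ _)

lemma fconv_efun (q : ℤ → ℂ) (p m : ℤ) : fconv q (efun p) m = q (m - p) := by
  unfold fconv efun
  rw [tsum_eq_single (m - p)]
  · simp
  · intro k hk
    have : m - k ≠ p := fun h => hk (by omega)
    simp [this]

lemma memHs_efun (s : ℝ) (p : ℤ) : memHs s (efun p) := by
  unfold memHs
  refine Summable.congr ((hasSum_ite_eq p (jap p ^ (2 * s))).summable) fun m => ?_
  by_cases h : m = p <;> simp [efun, h]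

lemma shiftNormSq_single (s : ℝ) (c : ℂ) (p j : ℤ) :
    shiftNormSq s j (fun m => if m = p then c else 0) = jap (p + j) ^ (2 * s) * ‖c‖ ^ 2 := by
  unfold shiftNormSq
  rw [tsum_eq_single p]
  · simp
  · intro b hb; simp [hb]

lemma lam_bound {n : ℕ} (hn : 1 ≤ n) {lam : ℂ}
    (hlam : ‖lam - (n : ℂ) ^ 2‖ ≤ (n : ℝ) / 2) {m : ℤ}
    (hm : |m| ≠ (n : ℤ)) : (n : ℝ) / 2 ≤ ‖lam - (m : ℂ) ^ 2‖ := by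
  have h1 : (n : ℝ) ≤ ‖(n : ℂ) ^ 2 - (m : ℂ) ^ 2‖ := by
    have hcast : ((n : ℂ) ^ 2 - (m : ℂ) ^ 2) = ((((n : ℤ) ^ 2 - m ^ 2 : ℤ) : ℝ) : ℂ) := by
      push_cast; ring
    rw [hcast, Complex.norm_real, Real.norm_eq_abs]
    have hZ : (n : ℤ) ≤ |(n : ℤ) ^ 2 - m ^ 2| := by
      have h2 : |(n : ℤ) ^ 2 - m ^ 2| = |(|m| - (n : ℤ))| * (|m| + n) := by
        have he : (n : ℤ) ^ 2 - m ^ 2 = -((|m| - n) * (|m| + n)) := by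
          have hsq : |m| ^ 2 = m ^ 2 := sq_abs m
          nlinarith [hsq]
        rw [he, abs_neg, abs_mul]
        congr 1
        exact abs_of_nonneg (by positivity)
      have h3 : 1 ≤ |(|m| - (n : ℤ))| := Int.one_le_abs (sub_ne_zero.mpr hm)
      have h4 : (n : ℤ) ≤ |m| + n := le_add_of_nonneg_left (abs_nonneg m)
      calc (n : ℤ) = 1 * n := (one_mul _).symm
        _ ≤ |(|m| - (n : ℤ))| * (|m| + n) := by
            apply mul_le_mul h3 h4 (by positivity) (abs_nonneg _)
        _ = |(n : ℤ) ^ 2 - m ^ 2| := h2.symm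
    rw [← Int.cast_abs]
    exact_mod_cast hZ
  have h2 : ‖(n : ℂ) ^ 2 - (m : ℂ) ^ 2‖ ≤
      ‖lam - (n : ℂ) ^ 2‖ + ‖lam - (m : ℂ) ^ 2‖ := by
    have h3 := norm_add_le ((n : ℂ) ^ 2 - lam) (lam - (m : ℂ) ^ 2)
    have h4 : (n : ℂ) ^ 2 - lam + (lam - (m : ℂ) ^ 2) = (n : ℂ) ^ 2 - (m : ℂ) ^ 2 := by ring
    rw [h4] at h3
    have h5 : ‖(n : ℂ) ^ 2 - lam‖ = ‖lam - (n : ℂ) ^ 2‖ :=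
      norm_sub_rev _ _
    rwa [h5] at h3
  linarith

end Chunk4
-- chunk 5: TnOp bounds
section Chunk5

lemma inv_norm_le {n : ℕ} (hn : 1 ≤ n) {lam : ℂ}
    (hlam : ‖lam - (n : ℂ) ^ 2‖ ≤ (n : ℝ) / 2) {m : ℤ}
    (hm : |m| ≠ (n : ℤ)) : ‖(lam - (m : ℂ) ^ 2)⁻¹‖ ≤ 2 / (n : ℝ) := by
  have hn0 : (0 : ℝ) < (n : ℝ) := by exact_mod_cast hn
  have h := lam_bound hn hlam hm
  rw [norm_inv]
  calc (‖lam - (m : ℂ) ^ 2‖)⁻¹ ≤ ((n : ℝ) / 2)⁻¹ :=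
        inv_anti₀ (by linarith) h
    _ = 2 / (n : ℝ) := by rw [inv_div]

lemma memQ_TnOp (q : ℤ → ℂ) (lam : ℂ) (n : ℕ) (w : ℤ → ℂ) :
    memQ n (TnOp q lam n w) := by
  constructor <;> simp [TnOp, Int.abs_natCast]

lemma memHs_TnOp {s : ℝ} (hs : 1 / 2 < s) {q w : ℤ → ℂ} {lam : ℂ} {n : ℕ}
    (hn : 1 ≤ n) (hlam : ‖lam - (n : ℂ) ^ 2‖ ≤ (n : ℝ) / 2)
    (hq : memHs s q) (hw : memHs s w) : memHs s (TnOp q lam n w) := by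
  have hf := memHs_fconv hs hq hw
  refine Summable.of_nonneg_of_le
    (fun m => mul_nonneg (jap_rpow_nonneg _ _) (sq_nonneg _)) (fun m => ?_)
    (hf.mul_left 4)
  unfold TnOp
  by_cases hm : |m| = (n : ℤ)
  · simp only [if_pos hm, norm_zero]
    have : (0:ℝ) ≤ 4 * (jap m ^ (2 * s) * ‖fconv q w m‖ ^ 2) := by
      apply mul_nonneg (by norm_num)
      exact mul_nonneg (jap_rpow_nonneg _ _) (sq_nonneg _)
    simpa using this
  · simp only [if_neg hm, norm_mul]
    have hn0 : (0 : ℝ) < (n : ℝ) := by exact_mod_cast hn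
    have hn1 : (1 : ℝ) ≤ (n : ℝ) := by exact_mod_cast hn
    have h : ‖(lam - (m : ℂ) ^ 2)⁻¹‖ ≤ 2 := by
      refine (inv_norm_le hn hlam hm).trans ?_
      rw [div_le_iff₀ hn0]
      nlinarith
    have hsq : (‖(lam - (m : ℂ) ^ 2)⁻¹‖ * ‖fconv q w m‖) ^ 2 ≤ 4 * ‖fconv q w m‖ ^ 2 := by
      calc (‖(lam - (m : ℂ) ^ 2)⁻¹‖ * ‖fconv q w m‖) ^ 2
          = ‖(lam - (m : ℂ) ^ 2)⁻¹‖ ^ 2 * ‖fconv q w m‖ ^ 2 := by ring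
        _ ≤ 2 ^ 2 * ‖fconv q w m‖ ^ 2 := by
            apply mul_le_mul_of_nonneg_right _ (sq_nonneg _)
            exact pow_le_pow_left₀ (norm_nonneg _) h 2
        _ = 4 * ‖fconv q w m‖ ^ 2 := by norm_num
    calc jap m ^ (2 * s) * (‖(lam - (m : ℂ) ^ 2)⁻¹‖ * ‖fconv q w m‖) ^ 2
        ≤ jap m ^ (2 * s) * (4 * ‖fconv q w m‖ ^ 2) :=
          mul_le_mul_of_nonneg_left hsq (jap_rpow_nonneg _ _)
      _ = 4 * (jap m ^ (2 * s) * ‖fconv q w m‖ ^ 2) := by ring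

lemma TnOp_efun (q : ℤ → ℂ) (lam : ℂ) (n : ℕ) (p m : ℤ) :
    TnOp q lam n (efun p) m =
      if |m| = (n : ℤ) then 0 else (lam - (m : ℂ) ^ 2)⁻¹ * q (m - p) := by
  unfold TnOp
  rw [fconv_efun]

lemma shiftNorm_TnOp_efun {s : ℝ} (hs0 : 0 ≤ s) {q : ℤ → ℂ} {lam : ℂ} {n : ℕ}
    (hn : 1 ≤ n) (hlam : ‖lam - (n : ℂ) ^ 2‖ ≤ (n : ℝ) / 2)
    (hq : memHs s q) (p : ℤ) :
    shiftNorm s (-p) (TnOp q lam n (efun p)) ≤ 2 / (n : ℝ) * sobNorm s q := by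
  have hn0 : (0 : ℝ) < (n : ℝ) := by exact_mod_cast hn
  have hq' : Summable fun m : ℤ => jap (m - p + 0) ^ (2 * s) * ‖q (m - p)‖ ^ 2 := by
    have : Summable ((fun k : ℤ => jap (k + 0) ^ (2 * s) * ‖q k‖ ^ 2) ∘
        (Equiv.subRight p)) := by
      refine ((Equiv.subRight p).summable_iff).mpr ?_
      refine Summable.congr hq fun k => by rw [add_zero]
    exact this
  have hterm : ∀ m : ℤ, jap (m + -p) ^ (2 * s) * ‖TnOp q lam n (efun p) m‖ ^ 2 ≤
      (2 / (n : ℝ)) ^ 2 * (jap (m - p + 0) ^ (2 * s) * ‖q (m - p)‖ ^ 2) := by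
    intro m
    rw [TnOp_efun]
    by_cases hm : |m| = (n : ℤ)
    · simp only [if_pos hm, norm_zero]
      have : (0:ℝ) ≤ (2 / (n : ℝ)) ^ 2 * (jap (m - p + 0) ^ (2 * s) * ‖q (m - p)‖ ^ 2) := by
        apply mul_nonneg (sq_nonneg _)
        exact mul_nonneg (jap_rpow_nonneg _ _) (sq_nonneg _)
      simpa using this
    · simp only [if_neg hm, norm_mul]
      have h := inv_norm_le hn hlam hm
      have hmp : m + -p = m - p + 0 := by ring
      rw [hmp]
      have hsq : (‖(lam - (m : ℂ) ^ 2)⁻¹‖ * ‖q (m - p)‖) ^ 2 ≤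
          (2 / (n : ℝ)) ^ 2 * ‖q (m - p)‖ ^ 2 := by
        calc (‖(lam - (m : ℂ) ^ 2)⁻¹‖ * ‖q (m - p)‖) ^ 2
            = ‖(lam - (m : ℂ) ^ 2)⁻¹‖ ^ 2 * ‖q (m - p)‖ ^ 2 := by ring
          _ ≤ (2 / (n : ℝ)) ^ 2 * ‖q (m - p)‖ ^ 2 := by
              apply mul_le_mul_of_nonneg_right _ (sq_nonneg _)
              exact pow_le_pow_left₀ (norm_nonneg _) h 2
      calc jap (m - p + 0) ^ (2 * s) * (‖(lam - (m : ℂ) ^ 2)⁻¹‖ * ‖q (m - p)‖) ^ 2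
          ≤ jap (m - p + 0) ^ (2 * s) * ((2 / (n : ℝ)) ^ 2 * ‖q (m - p)‖ ^ 2) :=
            mul_le_mul_of_nonneg_left hsq (jap_rpow_nonneg _ _)
        _ = (2 / (n : ℝ)) ^ 2 * (jap (m - p + 0) ^ (2 * s) * ‖q (m - p)‖ ^ 2) := by ring
  have key : shiftNormSq s (-p) (TnOp q lam n (efun p)) ≤
      (2 / (n : ℝ)) ^ 2 * shiftNormSq s 0 q := by
    unfold shiftNormSq
    have hLsum : Summable fun m : ℤ =>
        jap (m + -p) ^ (2 * s) * ‖TnOp q lam n (efun p) m‖ ^ 2 := by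
      refine Summable.of_nonneg_of_le
        (fun m => mul_nonneg (jap_rpow_nonneg _ _) (sq_nonneg _)) hterm
        (hq'.mul_left _)
    calc ∑' m : ℤ, jap (m + -p) ^ (2 * s) * ‖TnOp q lam n (efun p) m‖ ^ 2
        ≤ ∑' m : ℤ, (2 / (n : ℝ)) ^ 2 * (jap (m - p + 0) ^ (2 * s) * ‖q (m - p)‖ ^ 2) :=
          Summable.tsum_le_tsum hterm hLsum (hq'.mul_left _)
      _ = (2 / (n : ℝ)) ^ 2 * ∑' m : ℤ, jap (m - p + 0) ^ (2 * s) * ‖q (m - p)‖ ^ 2 :=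
          tsum_mul_left
      _ = (2 / (n : ℝ)) ^ 2 * ∑' k : ℤ, jap (k + 0) ^ (2 * s) * ‖q k‖ ^ 2 := by
          congr 1
          exact (Equiv.subRight p).tsum_eq (fun k : ℤ => jap (k + 0) ^ (2 * s) * ‖q k‖ ^ 2)
  have h2n : (0:ℝ) ≤ 2 / (n : ℝ) := by positivity
  calc shiftNorm s (-p) (TnOp q lam n (efun p))
      = Real.sqrt (shiftNormSq s (-p) (TnOp q lam n (efun p))) := rfl
    _ ≤ Real.sqrt ((2 / (n : ℝ)) ^ 2 * shiftNormSq s 0 q) := Real.sqrt_le_sqrt key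
    _ = 2 / (n : ℝ) * sobNorm s q := by
        rw [Real.sqrt_mul (sq_nonneg _), Real.sqrt_sq h2n]
        rfl

end Chunk5

-- chunk 6: linearity
section Chunk6

lemma TnOp_linear {s : ℝ} (hs : 1 / 2 < s) {q A B : ℤ → ℂ} {lam : ℂ} {n : ℕ}
    (hq : memHs s q) (hA : memHs s A) (hB : memHs s B) (a b : ℂ) (m : ℤ) :
    TnOp q lam n (fun x => a * A x + b * B x) m =
      a * TnOp q lam n A m + b * TnOp q lam n B m := by
  unfold TnOp
  by_cases hm : |m| = (n : ℤ)
  · simp [hm]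
  · simp only [if_neg hm]
    have hA' := summable_conv_of hs hq hA m
    have hB' := summable_conv_of hs hq hB m
    have hfc : fconv q (fun x => a * A x + b * B x) m =
        a * fconv q A m + b * fconv q B m := by
      unfold fconv
      calc ∑' k, q k * (a * A (m - k) + b * B (m - k))
          = ∑' k, (a * (q k * A (m - k)) + b * (q k * B (m - k))) :=
            tsum_congr fun k => by ring
        _ = (∑' k, a * (q k * A (m - k))) + ∑' k, b * (q k * B (m - k)) :=
            Summable.tsum_add (hA'.mul_left a) (hB'.mul_left b)
        _ = a * fconv q A m + b * fconv q B m := by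
            rw [tsum_mul_left, tsum_mul_left]; rfl
    rw [hfc]; ring

end Chunk6


/-- **Theorem 3.5 (Craig–Wayne Lemma in Sobolev regularity).**
For `u = u⁻ e_{−n} + u⁺ e_n` with `|u⁻|, |u⁺| ≤ 1`, `v := (Id − T_n)^{-1} T_n u` and
`f := u + v`, one has `|(f, e_m)_{L²}| ≤ 2 ⟨|m| − n⟩^{-s}` for every `m ∈ ℤ`. -/
theorem theorem_3_5 (s : ℝ) (hs : 1 / 2 < s) (Cs : ℝ) (hCs : 0 < Cs)
    (hbound : ∀ (q : ℤ → ℂ) (n : ℕ) (lam : ℂ) (j : ℤ) (w : ℤ → ℂ),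
      1 ≤ n → memHs s q →
      ‖lam - (n : ℂ) ^ 2‖ ≤ (n : ℝ) / 2 →
      memQ n w → memHs s w →
      shiftNorm s j (TnOp q lam n w) ≤ Cs * (n : ℝ)⁻¹ * sobNorm s q * shiftNorm s j w)
    (q : ℤ → ℂ) (hqreal : ∀ k : ℤ, q (-k) = (starRingEnd ℂ) (q k))
    (n : ℕ) (hn : 1 ≤ n) (hq : memHs s q)
    (hqsmall : sobNorm s q ≤ (n : ℝ) / (2 * Cs))
    (lam : ℂ) (hlam : ‖lam - (n : ℂ) ^ 2‖ ≤ (n : ℝ) / 2)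
    (um up : ℂ) (hum : ‖um‖ ≤ 1) (hup : ‖up‖ ≤ 1) :
    ∀ m : ℤ,
      ‖(um • efun (-(n : ℤ)) + up • efun (n : ℤ) +
            neumann q lam n (TnOp q lam n (um • efun (-(n : ℤ)) + up • efun (n : ℤ)))) m‖
        ≤ 2 * jap (|m| - (n : ℤ)) ^ (-s) := by
  intro m
  have hs0 : (0 : ℝ) ≤ s := by linarith
  have hn0 : (0 : ℝ) < (n : ℝ) := by exact_mod_cast hn
  -- Step 1 : derive Cs ≥ 2 from hbound
  have hCs2 : (2 : ℝ) ≤ Cs := by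
    have hlam1 : ‖(1 / 2 : ℂ) - ((1 : ℕ) : ℂ) ^ 2‖ ≤ ((1 : ℕ) : ℝ) / 2 := by
      have h : ((1 / 2 : ℂ) - ((1 : ℕ) : ℂ) ^ 2) = ((-(1 / 2) : ℝ) : ℂ) := by
        push_cast; norm_num
      rw [h, Complex.norm_real, Real.norm_eq_abs, abs_neg, abs_of_nonneg (by norm_num : (0:ℝ) ≤ (1/2:ℝ))]
      norm_num
    have hQ1 : memQ 1 (efun 0) := by constructor <;> simp [efun]
    have h := hbound (efun 0) 1 (1 / 2) 0 (efun 0) le_rfl (memHs_efun s 0) hlam1 hQ1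
      (memHs_efun s 0)
    have hT : TnOp (efun 0) (1 / 2) 1 (efun 0) = fun x => if x = 0 then (2 : ℂ) else 0 := by
      funext x
      rw [TnOp_efun]
      by_cases hx : x = 0
      · subst hx
        norm_num [efun]
      · have h0 : efun 0 (x - 0) = 0 := by simp [efun, hx]
        rw [if_neg hx]
        by_cases h1 : |x| = ((1 : ℕ) : ℤ)
        · rw [if_pos h1]
        · rw [if_neg h1, h0, mul_zero]
    rw [hT] at h
    have e1 : shiftNorm s 0 (fun x : ℤ => if x = 0 then (2 : ℂ) else 0) = 2 := by
      have hv : shiftNormSq s 0 (fun x : ℤ => if x = 0 then (2 : ℂ) else 0) = 4 := by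
        rw [shiftNormSq_single]
        norm_num [jap_zero, Real.one_rpow]
      rw [shiftNorm, hv, show (4 : ℝ) = 2 ^ 2 by norm_num, Real.sqrt_sq (by norm_num : (0:ℝ) ≤ 2)]
    have e2 : shiftNorm s 0 (efun 0) = 1 := by
      have hv : shiftNormSq s 0 (efun 0) = 1 := by
        rw [show (efun 0) = (fun x : ℤ => if x = 0 then (1 : ℂ) else 0) from rfl,
          shiftNormSq_single]
        norm_num [jap_zero, Real.one_rpow]
      rw [shiftNorm, hv, Real.sqrt_one]
    rw [e1, e2] at h
    have e3 : sobNorm s (efun 0) = 1 := e2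
    rw [e3] at h
    norm_num at h
    linarith
  -- Step 2 : iteration bounds
  set T := TnOp q lam n with hTdef
  set u : ℤ → ℂ := um • efun (-(n : ℤ)) + up • efun (n : ℤ) with hudef
  have hhalf : Cs * (n : ℝ)⁻¹ * sobNorm s q ≤ 1 / 2 := by
    calc Cs * (n : ℝ)⁻¹ * sobNorm s q ≤ Cs * (n : ℝ)⁻¹ * ((n : ℝ) / (2 * Cs)) :=
          mul_le_mul_of_nonneg_left hqsmall (by positivity)
      _ = 1 / 2 := by field_simp
  have hiter : ∀ p : ℤ, ∀ k : ℕ, memHs s (T^[k + 1] (efun p)) ∧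
      shiftNorm s (-p) (T^[k + 1] (efun p)) ≤ (1 / 2) ^ k * Cs⁻¹ := by
    intro p k
    induction k with
    | zero =>
      simp only [zero_add, Function.iterate_one, pow_zero, one_mul]
      refine ⟨memHs_TnOp hs hn hlam hq (memHs_efun s p), ?_⟩
      calc shiftNorm s (-p) (T (efun p)) ≤ 2 / (n : ℝ) * sobNorm s q :=
            shiftNorm_TnOp_efun hs0 hn hlam hq p
        _ ≤ 2 / (n : ℝ) * ((n : ℝ) / (2 * Cs)) :=
            mul_le_mul_of_nonneg_left hqsmall (by positivity)
        _ = Cs⁻¹ := by field_simp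
    | succ k ih =>
      have hmem := ih.1
      have hQmem : memQ n (T^[k + 1] (efun p)) := by
        rw [Function.iterate_succ_apply' T k (efun p)]
        exact memQ_TnOp q lam n _
      rw [Function.iterate_succ_apply' T (k + 1) (efun p)]
      refine ⟨memHs_TnOp hs hn hlam hq hmem, ?_⟩
      have h := hbound q n lam (-p) (T^[k + 1] (efun p)) hn hq hlam hQmem hmem
      calc shiftNorm s (-p) (T (T^[k + 1] (efun p)))
          ≤ Cs * (n : ℝ)⁻¹ * sobNorm s q * shiftNorm s (-p) (T^[k + 1] (efun p)) := h
        _ ≤ 1 / 2 * ((1 / 2) ^ k * Cs⁻¹) := by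
            apply mul_le_mul hhalf ih.2 (shiftNorm_nonneg _ _ _) (by norm_num)
        _ = (1 / 2) ^ (k + 1) * Cs⁻¹ := by ring
  have hcoeff : ∀ (p : ℤ) (k : ℕ) (x : ℤ), ‖T^[k + 1] (efun p) x‖ ≤
      (1 / 2) ^ k * (Cs⁻¹ * jap (x + -p) ^ (-s)) := by
    intro p k x
    obtain ⟨hmem, hnorm⟩ := hiter p k
    calc ‖T^[k + 1] (efun p) x‖
        ≤ jap (x + -p) ^ (-s) * shiftNorm s (-p) (T^[k + 1] (efun p)) :=
          coeff_le_shiftNorm hs0 hmem (-p) x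
      _ ≤ jap (x + -p) ^ (-s) * ((1 / 2) ^ k * Cs⁻¹) := by
          apply mul_le_mul_of_nonneg_left hnorm (jap_rpow_nonneg _ _)
      _ = (1 / 2) ^ k * (Cs⁻¹ * jap (x + -p) ^ (-s)) := by ring
  have hnormsum : ∀ (p x : ℤ), Summable fun k : ℕ => ‖T^[k + 1] (efun p) x‖ :=
    fun p x => Summable.of_nonneg_of_le (fun k => norm_nonneg _) (fun k => hcoeff p k x)
      (summable_geometric_two.mul_right _)
  have hsumm : ∀ (p x : ℤ), Summable fun k : ℕ => T^[k + 1] (efun p) x :=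
    fun p x => Summable.of_norm (hnormsum p x)
  have htsum : ∀ (p x : ℤ), ‖∑' k : ℕ, T^[k + 1] (efun p) x‖ ≤
      2 * (Cs⁻¹ * jap (x + -p) ^ (-s)) := by
    intro p x
    calc ‖∑' k : ℕ, T^[k + 1] (efun p) x‖ ≤ ∑' k : ℕ, ‖T^[k + 1] (efun p) x‖ :=
          norm_tsum_le_tsum_norm (hnormsum p x)
      _ ≤ ∑' k : ℕ, (1 / 2 : ℝ) ^ k * (Cs⁻¹ * jap (x + -p) ^ (-s)) :=
          Summable.tsum_le_tsum (fun k => hcoeff p k x) (hnormsum p x)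
            (summable_geometric_two.mul_right _)
      _ = 2 * (Cs⁻¹ * jap (x + -p) ^ (-s)) := by
          rw [tsum_mul_right, tsum_geometric_two]
  -- Step 3 : linearity of iterates
  have hmemk : ∀ (p : ℤ) (k : ℕ), memHs s (T^[k] (efun p)) := by
    intro p k
    cases k with
    | zero => simpa using memHs_efun s p
    | succ k => exact (hiter p k).1
  have hlin : ∀ (k : ℕ) (x : ℤ), T^[k] u x =
      um * T^[k] (efun (-(n : ℤ))) x + up * T^[k] (efun (n : ℤ)) x := by
    intro k
    induction k with
    | zero =>
      intro x
      simp [hudef, Pi.add_apply, Pi.smul_apply, smul_eq_mul]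
    | succ k ih =>
      intro x
      have hfun : T^[k] u =
          fun y => um * T^[k] (efun (-(n : ℤ))) y + up * T^[k] (efun (n : ℤ)) y :=
        funext ih
      rw [Function.iterate_succ_apply' T k u, hfun,
        Function.iterate_succ_apply' T k (efun (-(n : ℤ))),
        Function.iterate_succ_apply' T k (efun (n : ℤ))]
      exact TnOp_linear hs hq (hmemk _ k) (hmemk _ k) um up x
  -- Step 4 : expansion of the full function
  have hexpand : (u + neumann q lam n (T u)) m =
      u m + (um * ∑' k : ℕ, T^[k + 1] (efun (-(n : ℤ))) m +
        up * ∑' k : ℕ, T^[k + 1] (efun (n : ℤ)) m) := by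
    have h1 : neumann q lam n (T u) m = ∑' k : ℕ, T^[k + 1] u m := by
      apply tsum_congr
      intro k
      rw [← Function.iterate_succ_apply T k u]
    rw [Pi.add_apply, h1]
    congr 1
    calc ∑' k : ℕ, T^[k + 1] u m
        = ∑' k : ℕ, (um * T^[k + 1] (efun (-(n : ℤ))) m +
            up * T^[k + 1] (efun (n : ℤ)) m) := tsum_congr fun k => hlin (k + 1) m
      _ = um * (∑' k : ℕ, T^[k + 1] (efun (-(n : ℤ))) m) +
            up * ∑' k : ℕ, T^[k + 1] (efun (n : ℤ)) m := by
          rw [Summable.tsum_add ((hsumm _ m).mul_left um) ((hsumm _ m).mul_left up),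
            tsum_mul_left, tsum_mul_left]
  rw [hexpand]
  have hum' : ‖um‖ ≤ 1 := hum
  have hup' : ‖up‖ ≤ 1 := hup
  by_cases hm : |m| = (n : ℤ)
  · -- on the resonant set the Neumann tail vanishes
    have hz : ∀ p : ℤ, (∑' k : ℕ, T^[k + 1] (efun p) m) = 0 := by
      intro p
      have hzk : ∀ k : ℕ, T^[k + 1] (efun p) m = 0 := by
        intro k
        rw [Function.iterate_succ_apply' T k (efun p)]
        show TnOp q lam n (T^[k] (efun p)) m = 0
        unfold TnOp
        rw [if_pos hm]
      simp [hzk]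
    rw [hz, hz]
    simp only [mul_zero, add_zero]
    have hrhs : jap (|m| - (n : ℤ)) ^ (-s) = 1 := by
      rw [hm, sub_self, jap_zero, Real.one_rpow]
    rw [hrhs, mul_one]
    have humm : u m = um * efun (-(n : ℤ)) m + up * efun (n : ℤ) m := by
      simp [hudef, Pi.add_apply, Pi.smul_apply, smul_eq_mul]
    rw [humm]
    have hefn : ∀ p : ℤ, ‖efun p m‖ ≤ 1 := by
      intro p; unfold efun; split <;> simp
    calc ‖um * efun (-(n : ℤ)) m + up * efun (n : ℤ) m‖
        ≤ ‖um * efun (-(n : ℤ)) m‖ + ‖up * efun (n : ℤ) m‖ := norm_add_le _ _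
      _ = ‖um‖ * ‖efun (-(n : ℤ)) m‖ + ‖up‖ * ‖efun (n : ℤ) m‖ := by
          rw [norm_mul, norm_mul]
      _ ≤ 1 * 1 + 1 * 1 := add_le_add
          (mul_le_mul hum' (hefn _) (norm_nonneg _) zero_le_one)
          (mul_le_mul hup' (hefn _) (norm_nonneg _) zero_le_one)
      _ = 2 := by norm_num
  · -- off the resonant set, u m = 0
    have h1 : m ≠ (n : ℤ) := fun h => hm (by rw [h, Int.abs_natCast])
    have h2 : m ≠ -(n : ℤ) := fun h => hm (by rw [h, abs_neg, Int.abs_natCast])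
    have hu0 : u m = 0 := by simp [hudef, efun, h1, h2]
    rw [hu0, zero_add]
    set J : ℝ := jap (|m| - (n : ℤ)) ^ (-s) with hJ
    have hJ0 : 0 ≤ J := jap_rpow_nonneg _ _
    have habs1 : |(|m| - (n : ℤ))| ≤ |m + (n : ℤ)| := by
      have h := abs_abs_sub_abs_le_abs_sub m (-(n : ℤ))
      simpa [abs_neg, Int.abs_natCast, sub_neg_eq_add] using h
    have habs2 : |(|m| - (n : ℤ))| ≤ |m + -(n : ℤ)| := by
      have h := abs_abs_sub_abs_le_abs_sub m ((n : ℤ))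
      simpa [Int.abs_natCast, sub_eq_add_neg] using h
    have hc1 : jap (m + -(-(n : ℤ))) ^ (-s) ≤ J := by
      rw [neg_neg]
      exact jap_rpow_anti hs0 (jap_mono habs1)
    have hc2 : jap (m + -(n : ℤ)) ^ (-s) ≤ J :=
      jap_rpow_anti hs0 (jap_mono habs2)
    have hb1 : ‖∑' k : ℕ, T^[k + 1] (efun (-(n : ℤ))) m‖ ≤ 2 * (Cs⁻¹ * J) := by
      refine (htsum (-(n : ℤ)) m).trans ?_
      have := mul_le_mul_of_nonneg_left hc1 (inv_nonneg.mpr hCs.le)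
      linarith
    have hb2 : ‖∑' k : ℕ, T^[k + 1] (efun (n : ℤ)) m‖ ≤ 2 * (Cs⁻¹ * J) := by
      refine (htsum ((n : ℤ)) m).trans ?_
      have := mul_le_mul_of_nonneg_left hc2 (inv_nonneg.mpr hCs.le)
      linarith
    have hCsinv : Cs⁻¹ ≤ 1 / 2 := by
      rw [inv_le_comm₀ (by linarith) (by norm_num)]
      linarith
    calc ‖um * (∑' k : ℕ, T^[k + 1] (efun (-(n : ℤ))) m) +
          up * ∑' k : ℕ, T^[k + 1] (efun (n : ℤ)) m‖
        ≤ ‖um‖ * ‖∑' k : ℕ, T^[k + 1] (efun (-(n : ℤ))) m‖ +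
            ‖up‖ * ‖∑' k : ℕ, T^[k + 1] (efun (n : ℤ)) m‖ := by
          refine (norm_add_le _ _).trans ?_
          rw [norm_mul, norm_mul]
      _ ≤ 1 * (2 * (Cs⁻¹ * J)) + 1 * (2 * (Cs⁻¹ * J)) := add_le_add
          (mul_le_mul hum' hb1 (norm_nonneg _) zero_le_one)
          (mul_le_mul hup' hb2 (norm_nonneg _) zero_le_one)
      _ = 4 * Cs⁻¹ * J := by ring
      _ ≤ 2 * J := by nlinarith
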